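/- Let k : ℝ → ℝ be continuous with support in [0,1], and define φ₀(r) = -(1/r)∫₀^r s·e^{s²/2}(∫_s^∞ e^{-l²/2} k(l) dl) ds. Then there exists C > 0 depending only on k such that |φ₀'(r)| ≤ C/(r² + 1) for all r > 0. -/

import Mathlib

open MeasureTheory Real Set

theorem stmt3 (k : ℝ → ℝ) (hk : Continuous k)
    (hsupp : Function.support k ⊆ Set.Icc 0 1)
    (φ₀ : ℝ → ℝ)
    (hφ₀ : ∀ r > (0:ℝ), φ₀ r =
      -(1/r) * ∫ s in (0:ℝ)..r, s * Real.exp (s^2/2) *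
        (∫ l in Set.Ioi s, Real.exp (-l^2/2) * k l)) :
    (∀ r > (0:ℝ), DifferentiableAt ℝ φ₀ r) ∧
    ∃ C > (0:ℝ), ∀ r > (0:ℝ), |deriv φ₀ r| ≤ C / (r^2 + 1) := by
  set g : ℝ → ℝ := fun l => Real.exp (-l^2/2) * k l with hgdef
  have hgc : Continuous g := by
    exact (Real.continuous_exp.comp ((continuous_pow 2).neg.div_const 2)).mul hk
  have hk0 : ∀ l : ℝ, l ∉ Set.Icc (0:ℝ) 1 → k l = 0 := by
    intro l hl
    by_contra h
    exact hl (hsupp h)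
  have hg0 : ∀ l : ℝ, 1 < l → g l = 0 := by
    intro l hl
    have : k l = 0 := hk0 l (by simp [Set.mem_Icc]; intro _; linarith)
    simp [hgdef, this]
  have hgsupp : Function.support g ⊆ Set.Icc 0 1 := by
    intro x hx
    apply hsupp
    intro h
    exact hx (by simp [hgdef, h])
  have hgcs : HasCompactSupport g := by
    apply HasCompactSupport.of_support_subset_isCompact isCompact_Icc hgsupp
  have hgint : Integrable g := hgc.integrable_of_hasCompactSupport hgcs
  -- bound for g
  obtain ⟨M, hM0⟩ := isCompact_Icc.exists_bound_of_continuousOn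
    (hgc.continuousOn : ContinuousOn g (Set.Icc (0:ℝ) 1))
  have hMnonneg : 0 ≤ M := le_trans (norm_nonneg _) (hM0 0 (by norm_num))
  have hM : ∀ x : ℝ, |g x| ≤ M := by
    intro x
    by_cases hx : x ∈ Set.Icc (0:ℝ) 1
    · exact hM0 x hx
    · have : g x = 0 := by
        by_contra h
        exact hx (hgsupp h)
      simp [this, hMnonneg]
  -- The primitive of g from the right
  set G : ℝ → ℝ := fun s => ∫ l in s..2, g l with hGdef
  have hGeq : ∀ s : ℝ, (∫ l in Set.Ioi s, g l) = G s := by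
    intro s
    by_cases hs : s ≤ 2
    · have hsplit : Set.Ioi s = Set.Ioc s 2 ∪ Set.Ioi 2 := (Set.Ioc_union_Ioi_eq_Ioi hs).symm
      rw [hsplit, setIntegral_union (Set.Ioc_disjoint_Ioi le_rfl) measurableSet_Ioi
        hgint.integrableOn hgint.integrableOn]
      have h2 : (∫ l in Set.Ioi (2:ℝ), g l) = 0 :=
        setIntegral_eq_zero_of_forall_eq_zero fun x hx => hg0 x (by linarith [hx.out])
      rw [h2, add_zero]
      exact (intervalIntegral.integral_of_le hs).symm
    · push_neg at hs
      have h1 : (∫ l in Set.Ioi s, g l) = 0 :=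
        setIntegral_eq_zero_of_forall_eq_zero fun x hx => hg0 x (by linarith [hx.out])
      have h2 : G s = 0 := by
        show (∫ l in s..2, g l) = 0
        have : ∀ l ∈ Set.uIcc s 2, g l = 0 := by
          intro l hl
          rw [Set.uIcc_of_ge hs.le] at hl
          exact hg0 l (by linarith [hl.1])
        rw [intervalIntegral.integral_congr this]
        simp
      rw [h1, h2]
  have hGderiv : ∀ s : ℝ, HasDerivAt G (-(g s)) s := by
    intro s
    have h1 : HasDerivAt (fun u => ∫ x in (2:ℝ)..u, g x) (g s) s :=
      intervalIntegral.integral_hasDerivAt_right (hgc.intervalIntegrable _ _)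
        (hgc.stronglyMeasurableAtFilter _ _) hgc.continuousAt
    have h2 : HasDerivAt (fun u => -∫ x in (2:ℝ)..u, g x) (-(g s)) s := h1.neg
    convert h2 using 1
    funext u
    show (∫ x in u..2, g x) = -∫ x in (2:ℝ)..u, g x
    rw [intervalIntegral.integral_symm]
  have hGcont : Continuous G := by
    rw [continuous_iff_continuousAt]
    exact fun s => (hGderiv s).continuousAt
  have hGzero : ∀ s : ℝ, 1 ≤ s → G s = 0 := by
    intro s hs
    rw [← hGeq]
    exact setIntegral_eq_zero_of_forall_eq_zero fun x hx => hg0 x (lt_of_le_of_lt hs hx.out)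
  have hGbound : ∀ s : ℝ, 0 ≤ s → |G s| ≤ 2 * M := by
    intro s hs
    by_cases h2 : s ≤ 2
    · rw [hGdef]
      have := intervalIntegral.norm_integral_le_of_norm_le_const
        (C := M) (f := g) (a := s) (b := 2) (fun x _ => hM x)
      calc |∫ l in s..2, g l| ≤ M * |2 - s| := this
        _ ≤ M * 2 := by
            apply mul_le_mul_of_nonneg_left _ hMnonneg
            rw [abs_le]; constructor <;> linarith
        _ = 2 * M := by ring
    · rw [hGzero s (by linarith)]
      simp; positivity
  -- the integrand f
  set f : ℝ → ℝ := fun s => s * Real.exp (s^2/2) * G s with hfdef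
  have hfc : Continuous f := by
    exact (continuous_id.mul (Real.continuous_exp.comp ((continuous_pow 2).div_const 2))).mul hGcont
  have hfzero : ∀ s : ℝ, 1 ≤ s → f s = 0 := by
    intro s hs
    simp [hfdef, hGzero s hs]
  set B : ℝ := 2 * M * Real.exp 1 with hBdef
  have hBnonneg : 0 ≤ B := by positivity
  have hfB : ∀ s : ℝ, 0 ≤ s → |f s| ≤ B * s := by
    intro s hs
    by_cases h1 : s ≤ 1
    · have : |f s| = s * Real.exp (s^2/2) * |G s| := by
        rw [hfdef, abs_mul, abs_mul, abs_of_nonneg hs, abs_of_nonneg (Real.exp_pos _).le]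
      rw [this]
      have he : Real.exp (s^2/2) ≤ Real.exp 1 := by
        apply Real.exp_le_exp.mpr
        nlinarith
      calc s * Real.exp (s^2/2) * |G s| ≤ s * Real.exp 1 * (2 * M) := by
            apply mul_le_mul (mul_le_mul_of_nonneg_left he hs) (hGbound s hs) (abs_nonneg _)
            positivity
        _ = B * s := by rw [hBdef]; ring
    · rw [hfzero s (by linarith)]
      simp
      positivity
  -- the primitive F
  set F : ℝ → ℝ := fun r => ∫ s in (0:ℝ)..r, f s with hFdef
  have hFderiv : ∀ r : ℝ, HasDerivAt F (f r) r := fun r =>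
    intervalIntegral.integral_hasDerivAt_right (hfc.intervalIntegrable _ _)
      (hfc.stronglyMeasurableAtFilter _ _) hfc.continuousAt
  have hFsmall : ∀ r : ℝ, 0 ≤ r → r ≤ 1 → |F r| ≤ B * r ^ 2 := by
    intro r h0 h1
    rw [hFdef]
    have := intervalIntegral.norm_integral_le_of_norm_le_const
      (C := B * r) (f := f) (a := 0) (b := r) (fun x hx => by
        rw [Set.uIoc_of_le h0] at hx
        calc |f x| ≤ B * x := hfB x hx.1.le
          _ ≤ B * r := mul_le_mul_of_nonneg_left hx.2 hBnonneg)
    calc |∫ s in (0:ℝ)..r, f s| ≤ B * r * |r - 0| := this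
      _ = B * r ^ 2 := by rw [sub_zero, abs_of_nonneg h0]; ring
  have hFconst : ∀ r : ℝ, 1 ≤ r → F r = F 1 := by
    intro r hr
    have hadd : F 1 + (∫ s in (1:ℝ)..r, f s) = F r := by
      rw [hFdef]
      exact intervalIntegral.integral_add_adjacent_intervals
        (hfc.intervalIntegrable _ _) (hfc.intervalIntegrable _ _)
    have hz : (∫ s in (1:ℝ)..r, f s) = 0 := by
      have : ∀ s ∈ Set.uIcc (1:ℝ) r, f s = 0 := by
        intro s hs
        rw [Set.uIcc_of_le hr] at hs
        exact hfzero s hs.1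
      rw [intervalIntegral.integral_congr this]
      simp
    rw [← hadd, hz, add_zero]
  -- derivative of φ₀
  have hmain : ∀ r : ℝ, 0 < r → HasDerivAt φ₀ (F r / r ^ 2 - f r / r) r := by
    intro r hr
    have hinv : HasDerivAt (fun x : ℝ => -(1/x)) (1 / r ^ 2) r := by
      have := ((hasDerivAt_inv (ne_of_gt hr)).neg).congr_deriv (show _ = 1 / r ^ 2 by ring)
      refine this.congr_of_eventuallyEq (Filter.Eventually.of_forall fun x => ?_)
      simp
    have hprod : HasDerivAt (fun x => -(1/x) * F x)
        ((1 / r ^ 2) * F r + (-(1/r)) * f r) r := hinv.mul (hFderiv r)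
    have heq : φ₀ =ᶠ[nhds r] fun x => -(1/x) * F x := by
      filter_upwards [Ioi_mem_nhds hr] with x hx
      rw [hφ₀ x hx, hFdef]
      congr 1
      apply intervalIntegral.integral_congr
      intro s _
      rw [hfdef]
      simp only
      rw [hGeq]
    have := hprod.congr_of_eventuallyEq heq
    exact this.congr_deriv (by ring)
  constructor
  · exact fun r hr => (hmain r hr).differentiableAt
  · refine ⟨4 * B + 1, by positivity, fun r hr => ?_⟩
    rw [(hmain r hr).deriv]
    have hr2 : (0:ℝ) < r ^ 2 := by positivity
    by_cases h1 : r ≤ 1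
    · have hF : |F r| ≤ B * r ^ 2 := hFsmall r hr.le h1
      have hf : |f r| ≤ B * r := hfB r hr.le
      have h1' : |F r / r ^ 2 - f r / r| ≤ |F r| / r ^ 2 + |f r| / r := by
        calc |F r / r ^ 2 - f r / r| ≤ |F r / r ^ 2| + |f r / r| := abs_sub _ _
          _ = |F r| / r ^ 2 + |f r| / r := by
              rw [abs_div, abs_div, abs_of_pos hr2, abs_of_pos hr]
      have h2' : |F r| / r ^ 2 + |f r| / r ≤ 2 * B := by
        have a1 : |F r| / r ^ 2 ≤ B := by
          rw [div_le_iff₀ hr2]; linarith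
        have a2 : |f r| / r ≤ B := by
          rw [div_le_iff₀ hr]; linarith
        linarith
      have h3' : 2 * B ≤ (4 * B + 1) / (r ^ 2 + 1) := by
        rw [le_div_iff₀ (by positivity)]
        have hrr : r ^ 2 ≤ 1 := by nlinarith
        nlinarith [mul_nonneg hBnonneg (sub_nonneg.mpr hrr)]
      linarith
    · push_neg at h1
      rw [hFconst r h1.le, hfzero r h1.le]
      have hF1 : |F 1| ≤ B := by
        have := hFsmall 1 (by norm_num) (by norm_num)
        simpa using this
      simp only [zero_div, sub_zero]
      rw [abs_div, abs_of_pos hr2]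
      rw [div_le_div_iff₀ hr2 (by positivity)]
      have hr21 : r ^ 2 + 1 ≤ 2 * r ^ 2 := by nlinarith
      calc |F 1| * (r ^ 2 + 1) ≤ B * (2 * r ^ 2) :=
            mul_le_mul hF1 hr21 (by positivity) hBnonneg
        _ ≤ (4 * B + 1) * r ^ 2 := by nlinarith
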